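/- The maximal solution y is defined on all of ℝ and satisfies |y(u)| ≤ 1 for every u ∈ ℝ (the classical oscillation has bounded amplitude and exists globally). -/

import Mathlib

open Set Filter Topology

namespace SnAux

/-- the vector field of the first-order system -/
def v : ℝ × ℝ → ℝ × ℝ := fun p => (p.2, -2 * p.1 ^ 3)

noncomputable def eps : ℝ := (54 : ℝ)⁻¹

lemma eps_pos : 0 < eps := by norm_num [eps]

lemma lip3 : LipschitzOnWith 54 v {p : ℝ × ℝ | |p.1| ≤ 3} := by
  rw [lipschitzOnWith_iff_dist_le_mul]
  intro p hp q hq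
  simp only [mem_setOf_eq] at hp hq
  have h1 : dist p.1 q.1 ≤ dist p q := by rw [Prod.dist_eq]; exact le_max_left _ _
  have h2 : dist p.2 q.2 ≤ dist p q := by rw [Prod.dist_eq]; exact le_max_right _ _
  rw [Prod.dist_eq]
  apply max_le
  · simpa [v] using h2.trans (by nlinarith [dist_nonneg (x := p) (y := q)])
  · have key : dist (-2 * p.1 ^ 3) (-2 * q.1 ^ 3) ≤ 54 * dist p.1 q.1 := by
      rw [Real.dist_eq, Real.dist_eq]
      have e : -2 * p.1 ^ 3 - -2 * q.1 ^ 3 = -2 * (p.1 - q.1) * (p.1 ^ 2 + p.1 * q.1 + q.1 ^ 2) := by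
        ring
      rw [e, abs_mul, abs_mul]
      have hp' := abs_le.mp hp
      have hq' := abs_le.mp hq
      have hs : |p.1 ^ 2 + p.1 * q.1 + q.1 ^ 2| ≤ 27 := by
        rw [abs_le]; constructor <;> nlinarith
      have : |(-2 : ℝ)| = 2 := by norm_num
      rw [this]
      nlinarith [abs_nonneg (p.1 - q.1), abs_nonneg (p.1 ^ 2 + p.1 * q.1 + q.1 ^ 2)]
    calc dist (v p).2 (v q).2 = dist (-2 * p.1 ^ 3) (-2 * q.1 ^ 3) := rfl
      _ ≤ 54 * dist p.1 q.1 := key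
      _ ≤ 54 * dist p q := by nlinarith [dist_nonneg (x := p.1) (y := q.1)]

lemma ball_subset {x₀ : ℝ × ℝ} (hx : ‖x₀‖ ≤ 2) :
    Metric.closedBall x₀ 1 ⊆ {p : ℝ × ℝ | |p.1| ≤ 3} := by
  intro p hp
  simp only [Metric.mem_closedBall] at hp
  have h1 : dist p.1 x₀.1 ≤ dist p x₀ := by rw [Prod.dist_eq]; exact le_max_left _ _
  have h2 : |x₀.1| ≤ 2 := le_trans (by rw [← Real.norm_eq_abs]; exact norm_fst_le x₀) hx
  simp only [mem_setOf_eq]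
  have := abs_sub_abs_le_abs_sub p.1 x₀.1
  rw [← Real.dist_eq] at this
  linarith

lemma local_sol (t₀ : ℝ) (x₀ : ℝ × ℝ) (hx : ‖x₀‖ ≤ 2) :
    ∃ f : ℝ → ℝ × ℝ, f t₀ = x₀ ∧ ∀ t ∈ Icc (t₀ - eps) (t₀ + eps),
      HasDerivWithinAt f (v (f t)) (Icc (t₀ - eps) (t₀ + eps)) t := by
  have hpl : IsPicardLindelof (fun _ => v) (tmin := t₀ - eps) (tmax := t₀ + eps)
      ⟨t₀, by constructor <;> linarith [eps_pos]⟩ x₀ 1 0 54 54 := by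
    constructor
    · exact fun t _ => lip3.mono (ball_subset hx)
    · exact fun x _ => continuousOn_const
    · intro t _ x hxb
      have hmem := ball_subset hx hxb
      simp only [mem_setOf_eq] at hmem
      have h2 : |x₀.2| ≤ 2 := le_trans (by rw [← Real.norm_eq_abs]; exact norm_snd_le x₀) hx
      have hd : dist x.2 x₀.2 ≤ 1 := by
        refine le_trans ?_ (Metric.mem_closedBall.mp hxb)
        rw [Prod.dist_eq]; exact le_max_right _ _
      have hx2 : |x.2| ≤ 3 := by
        have := abs_sub_abs_le_abs_sub x.2 x₀.2
        rw [← Real.dist_eq] at this; linarith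
      have : ‖v x‖ = max ‖x.2‖ ‖-2 * x.1 ^ 3‖ := rfl
      rw [this]
      apply max_le
      · rw [Real.norm_eq_abs]; push_cast; linarith
      · rw [Real.norm_eq_abs, abs_mul]
        have : |(-2 : ℝ)| = 2 := by norm_num
        rw [this, abs_pow]
        have := pow_le_pow_left₀ (abs_nonneg x.1) hmem 3
        norm_num at this ⊢
        linarith
    · have : max (t₀ + eps - t₀) (t₀ - (t₀ - eps)) = eps := by
        rw [add_sub_cancel_left, sub_sub_cancel, max_self]
      rw [this]
      norm_num [eps]
  obtain ⟨f, hf0, hf⟩ := hpl.exists_eq_forall_mem_Icc_hasDerivWithinAt₀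
  exact ⟨f, hf0, hf⟩

/-- reflection symmetry of the system -/
noncomputable def refl (f : ℝ → ℝ × ℝ) : ℝ → ℝ × ℝ := fun t => (-(f (-t)).1, (f (-t)).2)

lemma refl_refl (f : ℝ → ℝ × ℝ) : refl (refl f) = f := by
  funext t; simp [refl]

lemma refl_solves {f : ℝ → ℝ × ℝ} {a b : ℝ}
    (hf : ∀ t ∈ Icc a b, HasDerivWithinAt f (v (f t)) (Icc a b) t) :
    ∀ t ∈ Icc (-b) (-a), HasDerivWithinAt (refl f) (v (refl f t)) (Icc (-b) (-a)) t := by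
  intro t ht
  have hmt : -t ∈ Icc a b := ⟨le_neg.mp ht.2, neg_le.mp ht.1⟩
  have h := hf (-t) hmt
  have hmaps : MapsTo Neg.neg (Icc (-b) (-a)) (Icc a b) :=
    fun s hs => ⟨le_neg.mp hs.2, neg_le.mp hs.1⟩
  have h2 : HasDerivWithinAt (fun s => f (-s)) ((-1 : ℝ) • v (f (-t))) (Icc (-b) (-a)) t :=
    HasDerivWithinAt.scomp t h (hasDerivWithinAt_neg t (Icc (-b) (-a))) hmaps
  have hA : HasDerivWithinAt (fun s => (f (-s)).1) (-(f (-t)).2) (Icc (-b) (-a)) t := by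
    have := (ContinuousLinearMap.fst ℝ ℝ ℝ).hasFDerivAt.comp_hasDerivWithinAt t h2
    simpa [v, Function.comp_def] using this
  have hA' : HasDerivWithinAt (fun s => -(f (-s)).1) ((f (-t)).2) (Icc (-b) (-a)) t := by
    have := hA.neg; simp only [neg_neg] at this; exact this
  have hB : HasDerivWithinAt (fun s => (f (-s)).2) (2 * (f (-t)).1 ^ 3) (Icc (-b) (-a)) t := by
    have := (ContinuousLinearMap.snd ℝ ℝ ℝ).hasFDerivAt.comp_hasDerivWithinAt t h2
    simpa [v, Function.comp_def] using this
  have hP := hA'.prodMk hB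
  refine hP.congr_deriv ?_
  simp only [v, refl]
  ring_nf

/-- extend a solution to the right by `eps` -/
lemma extend_right {f : ℝ → ℝ × ℝ} {a b : ℝ} (hab : a ≤ b)
    (hf : ∀ t ∈ Icc a b, HasDerivWithinAt f (v (f t)) (Icc a b) t)
    (hfb : ‖f b‖ ≤ 2) :
    ∃ F : ℝ → ℝ × ℝ, (∀ t ∈ Icc a b, F t = f t) ∧
      ∀ t ∈ Icc a (b + eps), HasDerivWithinAt F (v (F t)) (Icc a (b + eps)) t := by
  obtain ⟨g, hgb, hg⟩ := local_sol b (f b) hfb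
  set F : ℝ → ℝ × ℝ := fun t => if t ≤ b then f t else g t with hF
  have hFf : ∀ t ∈ Icc a b, F t = f t := fun t ht => if_pos ht.2
  have hFg : ∀ t ∈ Icc b (b + eps), F t = g t := by
    intro t ht
    rcases lt_or_eq_of_le ht.1 with h | h
    · exact if_neg (not_le.mpr h)
    · simp [hF, ← h, hgb]
  refine ⟨F, hFf, ?_⟩
  intro t ht
  have hbig : Icc a (b + eps) = Icc a b ∪ Icc b (b + eps) :=
    (Icc_union_Icc_eq_Icc hab (by linarith [eps_pos])).symm
  rcases lt_trichotomy t b with hlt | heq | hgt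
  · -- t < b
    have hmem : Icc a b ∈ 𝓝[Icc a (b + eps)] t := by
      have h1 : Iio b ∩ Icc a (b + eps) ∈ 𝓝[Icc a (b + eps)] t :=
        inter_mem (mem_nhdsWithin_of_mem_nhds (Iio_mem_nhds hlt)) self_mem_nhdsWithin
      exact mem_of_superset h1 (fun s hs => ⟨hs.2.1, le_of_lt hs.1⟩)
    have h := (hf t ⟨ht.1, hlt.le⟩).mono_of_mem_nhdsWithin hmem
    have hFeq : F =ᶠ[𝓝[Icc a (b + eps)] t] f := eventuallyEq_of_mem hmem hFf
    refine (h.congr_of_eventuallyEq hFeq (hFf t ⟨ht.1, hlt.le⟩)).congr_deriv ?_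
    rw [hFf t ⟨ht.1, hlt.le⟩]
  · -- t = b
    subst heq
    have hL : HasDerivWithinAt F (v (F t)) (Icc a t) t := by
      refine ((hf t ⟨hab, le_rfl⟩).congr (fun s hs => (hFf s hs)) (hFf t ⟨hab, le_rfl⟩)).congr_deriv ?_
      rw [hFf t ⟨hab, le_rfl⟩]
    have hR : HasDerivWithinAt F (v (F t)) (Icc t (t + eps)) t := by
      have hsub : Icc t (t + eps) ⊆ Icc (t - eps) (t + eps) :=
        Icc_subset_Icc (by linarith [eps_pos]) le_rfl
      have hg' := (hg t ⟨by linarith [eps_pos], by linarith [eps_pos]⟩).mono hsub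
      refine (hg'.congr (fun s hs => hFg s hs) (hFg t ⟨le_rfl, by linarith [eps_pos]⟩)).congr_deriv ?_
      rw [hFg t ⟨le_rfl, by linarith [eps_pos]⟩]
    rw [hbig]
    exact hL.union hR
  · -- t > b
    have htmem : t ∈ Icc b (b + eps) := ⟨le_of_lt hgt, ht.2⟩
    have hoi : Ioi b ∩ Icc a (b + eps) ∈ 𝓝[Icc a (b + eps)] t :=
      inter_mem (mem_nhdsWithin_of_mem_nhds (Ioi_mem_nhds hgt)) self_mem_nhdsWithin
    have hsmall : Icc (b - eps) (b + eps) ∈ 𝓝[Icc a (b + eps)] t :=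
      mem_of_superset hoi (fun s hs => ⟨by linarith [mem_Ioi.mp hs.1, eps_pos], hs.2.2⟩)
    have hg' := (hg t ⟨by linarith [eps_pos], ht.2⟩).mono_of_mem_nhdsWithin hsmall
    have hFeq : F =ᶠ[𝓝[Icc a (b + eps)] t] g :=
      eventuallyEq_of_mem hoi (fun s hs => if_neg (not_le.mpr hs.1))
    refine (hg'.congr_of_eventuallyEq hFeq (hFg t htmem)).congr_deriv ?_
    rw [hFg t htmem]

lemma fst_deriv {f : ℝ → ℝ × ℝ} {s : Set ℝ} {t : ℝ}
    (h : HasDerivWithinAt f (v (f t)) s t) :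
    HasDerivWithinAt (fun s => (f s).1) ((f t).2) s t := by
  have := (ContinuousLinearMap.fst ℝ ℝ ℝ).hasFDerivAt.comp_hasDerivWithinAt t h
  simpa [v, Function.comp_def] using this

lemma snd_deriv {f : ℝ → ℝ × ℝ} {s : Set ℝ} {t : ℝ}
    (h : HasDerivWithinAt f (v (f t)) s t) :
    HasDerivWithinAt (fun s => (f s).2) (-2 * (f t).1 ^ 3) s t := by
  have := (ContinuousLinearMap.snd ℝ ℝ ℝ).hasFDerivAt.comp_hasDerivWithinAt t h
  simpa [v, Function.comp_def] using this

lemma energy {f : ℝ → ℝ × ℝ} {a b : ℝ} (ha : a ≤ 0) (hb : 0 ≤ b)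
    (hf : ∀ t ∈ Icc a b, HasDerivWithinAt f (v (f t)) (Icc a b) t)
    (h0 : f 0 = (0, 1)) :
    ∀ t ∈ Icc a b, (f t).1 ^ 4 + (f t).2 ^ 2 = 1 := by
  set E : ℝ → ℝ := fun t => (f t).1 ^ 4 + (f t).2 ^ 2 with hE
  have hEderiv : ∀ t ∈ Icc a b, HasDerivWithinAt E 0 (Icc a b) t := by
    intro t ht
    have h1 := (fst_deriv (hf t ht)).pow 4
    have h2 := (snd_deriv (hf t ht)).pow 2
    have := h1.add h2
    refine this.congr_deriv ?_
    push_cast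
    ring
  have hcont : ContinuousOn E (Icc a b) := fun t ht => (hEderiv t ht).continuousWithinAt
  have hright : ∀ t ∈ Ico a b, HasDerivWithinAt E 0 (Ici t) t := by
    intro t ht
    apply (hEderiv t ⟨ht.1, le_of_lt ht.2⟩).mono_of_mem_nhdsWithin
    have h1 : Iio b ∩ Ici t ∈ 𝓝[Ici t] t :=
      inter_mem (mem_nhdsWithin_of_mem_nhds (Iio_mem_nhds ht.2)) self_mem_nhdsWithin
    exact mem_of_superset h1 (fun s hs => ⟨le_trans ht.1 hs.2, le_of_lt hs.1⟩)
  have hconst := constant_of_has_deriv_right_zero hcont hright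
  intro t ht
  have h1 := hconst t ht
  have h2 := hconst 0 ⟨ha, hb⟩
  have : E 0 = 1 := by simp [hE, h0]
  show E t = 1
  rw [h1, ← h2, this]

/-- length of the guaranteed interval -/
noncomputable def c (n : ℕ) : ℝ := (n + 1) * eps

lemma c_pos (n : ℕ) : 0 < c n := by
  have h : (0:ℝ) < (n:ℝ) + 1 := by positivity
  exact mul_pos h eps_pos

lemma c_succ (n : ℕ) : c (n + 1) = c n + eps := by
  simp only [c]
  push_cast
  ring

lemma c_mono {m n : ℕ} (h : m ≤ n) : c m ≤ c n := by
  have : ((m:ℝ) + 1) ≤ ((n:ℝ) + 1) := by exact_mod_cast Nat.succ_le_succ h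
  exact mul_le_mul_of_nonneg_right this (le_of_lt eps_pos)

lemma norm_le_one_of_energy {p : ℝ × ℝ} (h : p.1 ^ 4 + p.2 ^ 2 = 1) : ‖p‖ ≤ 1 := by
  have h1 : |p.1| ≤ 1 := by
    rw [abs_le]
    constructor <;> nlinarith [sq_nonneg p.2, sq_nonneg (p.1 ^ 2 - 1), sq_nonneg (p.1 - 1),
      sq_nonneg (p.1 + 1), sq_nonneg p.1]
  have h2 : |p.2| ≤ 1 := by
    rw [abs_le]
    constructor <;> nlinarith [sq_nonneg (p.1 ^ 2), sq_nonneg (p.2 - 1), sq_nonneg (p.2 + 1)]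
  have : ‖p‖ = max ‖p.1‖ ‖p.2‖ := rfl
  rw [this, Real.norm_eq_abs, Real.norm_eq_abs]
  exact max_le h1 h2

lemma sol_exists (n : ℕ) : ∃ f : ℝ → ℝ × ℝ, f 0 = (0, 1) ∧
    ∀ t ∈ Icc (-(c n)) (c n), HasDerivWithinAt f (v (f t)) (Icc (-(c n)) (c n)) t := by
  induction n with
  | zero =>
    have hnorm : ‖((0:ℝ), (1:ℝ))‖ ≤ 2 := by
      have : ‖((0:ℝ), (1:ℝ))‖ = max ‖(0:ℝ)‖ ‖(1:ℝ)‖ := rfl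
      rw [this]; norm_num
    obtain ⟨f, hf0, hf⟩ := local_sol 0 ((0:ℝ), (1:ℝ)) hnorm
    have hc0 : c 0 = eps := by simp [c]
    refine ⟨f, hf0, ?_⟩
    rw [hc0]
    have he : Icc (-eps) eps = Icc (0 - eps) (0 + eps) := by norm_num
    rw [he]
    exact hf
  | succ n ih =>
    obtain ⟨f, hf0, hf⟩ := ih
    have h0mem : (0:ℝ) ∈ Icc (-(c n)) (c n) := ⟨by linarith [c_pos n], le_of_lt (c_pos n)⟩
    have hen := energy (by linarith [c_pos n]) (le_of_lt (c_pos n)) hf hf0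
    have hnormf : ∀ t ∈ Icc (-(c n)) (c n), ‖f t‖ ≤ 2 :=
      fun t ht => le_trans (norm_le_one_of_energy (hen t ht)) one_le_two
    -- extend right
    obtain ⟨F, hFf, hF⟩ := extend_right (by linarith [c_pos n]) hf
      (hnormf (c n) ⟨by linarith [c_pos n], le_rfl⟩)
    -- reflect, extend right again, reflect back
    have hrefl := refl_solves hF
    rw [neg_neg] at hrefl
    have hnormref : ‖refl F (c n)‖ ≤ 2 := by
      have h1 : refl F (c n) = (-(F (-(c n))).1, (F (-(c n))).2) := rfl
      have h2 : F (-(c n)) = f (-(c n)) := hFf _ ⟨le_rfl, by linarith [c_pos n]⟩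
      have h3 : ‖refl F (c n)‖ = ‖F (-(c n))‖ := by
        rw [h1]
        show max ‖-(F (-(c n))).1‖ ‖(F (-(c n))).2‖ = max ‖(F (-(c n))).1‖ ‖(F (-(c n))).2‖
        rw [norm_neg]
      rw [h3, h2]
      exact hnormf _ ⟨le_rfl, by linarith [c_pos n]⟩
    obtain ⟨G, hGrefl, hG⟩ := extend_right (by linarith [c_pos n, eps_pos]) hrefl hnormref
    have hsol := refl_solves hG
    rw [neg_neg] at hsol
    rw [← c_succ] at hsol
    refine ⟨refl G, ?_, hsol⟩
    have hG0 : G 0 = refl F 0 := hGrefl 0 ⟨by linarith [c_pos n, eps_pos], le_of_lt (c_pos n)⟩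
    have hF0 : F 0 = f 0 := hFf 0 h0mem
    simp only [refl, neg_zero]
    rw [hG0]
    simp only [refl, neg_zero]
    rw [hF0, hf0]
    norm_num

noncomputable def sol (n : ℕ) : ℝ → ℝ × ℝ := (sol_exists n).choose

lemma sol_zero (n : ℕ) : sol n 0 = (0, 1) := (sol_exists n).choose_spec.1

lemma sol_deriv (n : ℕ) : ∀ t ∈ Icc (-(c n)) (c n),
    HasDerivWithinAt (sol n) (v (sol n t)) (Icc (-(c n)) (c n)) t :=
  (sol_exists n).choose_spec.2

lemma sol_energy (n : ℕ) : ∀ t ∈ Icc (-(c n)) (c n),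
    (sol n t).1 ^ 4 + (sol n t).2 ^ 2 = 1 :=
  energy (by linarith [c_pos n]) (le_of_lt (c_pos n)) (sol_deriv n) (sol_zero n)

lemma lip_ball : ∀ _ : ℝ, LipschitzOnWith 54 v (Metric.closedBall (0 : ℝ × ℝ) 2) := by
  intro _
  apply lip3.mono
  intro p hp
  simp only [Metric.mem_closedBall, dist_zero_right] at hp
  have : |p.1| ≤ ‖p‖ := by rw [← Real.norm_eq_abs]; exact norm_fst_le p
  simp only [mem_setOf_eq]
  linarith

lemma sol_hasDerivAt (n : ℕ) {t : ℝ} (ht : t ∈ Ioo (-(c n)) (c n)) :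
    HasDerivAt (sol n) (v (sol n t)) t :=
  (sol_deriv n t (Ioo_subset_Icc_self ht)).hasDerivAt (Icc_mem_nhds ht.1 ht.2)

lemma sol_eqOn {m n : ℕ} (h : m ≤ n) :
    EqOn (sol m) (sol n) (Icc (-(c m)) (c m)) := by
  apply ODE_solution_unique_of_mem_Icc (v := fun _ => v)
    (s := fun _ => Metric.closedBall (0 : ℝ × ℝ) 2) (K := 54) (fun t _ => lip_ball t)
    (t₀ := 0) ⟨by linarith [c_pos m], c_pos m⟩
  · exact fun t ht => (sol_deriv m t ht).continuousWithinAt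
  · exact fun t ht => sol_hasDerivAt m ht
  · intro t ht
    simp only [Metric.mem_closedBall, dist_zero_right]
    exact le_trans (norm_le_one_of_energy (sol_energy m t (Ioo_subset_Icc_self ht))) one_le_two
  · exact fun t ht => ((sol_deriv n t
      (Icc_subset_Icc (neg_le_neg (c_mono h)) (c_mono h) ht)).continuousWithinAt).mono
      (Icc_subset_Icc (neg_le_neg (c_mono h)) (c_mono h))
  · intro t ht
    exact sol_hasDerivAt n ⟨lt_of_le_of_lt (neg_le_neg (c_mono h)) ht.1,
      lt_of_lt_of_le ht.2 (c_mono h)⟩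
  · intro t ht
    simp only [Metric.mem_closedBall, dist_zero_right]
    refine le_trans (norm_le_one_of_energy (sol_energy n t ?_)) one_le_two
    exact Icc_subset_Icc (neg_le_neg (c_mono h)) (c_mono h) (Ioo_subset_Icc_self ht)
  · rw [sol_zero, sol_zero]

/-- big enough index for a point `u` -/
noncomputable def N (u : ℝ) : ℕ := 54 * (⌈|u|⌉₊ + 1)

lemma abs_add_one_le_cN (u : ℝ) : |u| + 1 ≤ c (N u) := by
  have h1 : |u| ≤ (⌈|u|⌉₊ : ℝ) := Nat.le_ceil _
  have h2 : c (N u) = ((54 * (⌈|u|⌉₊ + 1) : ℕ) + 1 : ℝ) * eps := rfl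
  have h3 : ((54 * (⌈|u|⌉₊ + 1) : ℕ) : ℝ) = 54 * ((⌈|u|⌉₊ : ℝ) + 1) := by push_cast; ring
  rw [h2, h3, eps, ← div_eq_mul_inv, le_div_iff₀ (by norm_num : (0:ℝ) < 54)]
  linarith

noncomputable def Y : ℝ → ℝ × ℝ := fun u => sol (N u) u

lemma Y_eq_sol {n : ℕ} {u : ℝ} (hu : |u| ≤ c n) : Y u = sol n u := by
  have hu' : |u| ≤ c (N u) := by linarith [abs_add_one_le_cN u]
  have hmin : |u| ≤ c (min (N u) n) := by
    rcases le_total (N u) n with h | h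
    · rw [min_eq_left h]; exact hu'
    · rw [min_eq_right h]; exact hu
  have hmem : u ∈ Icc (-(c (min (N u) n))) (c (min (N u) n)) := abs_le.mp hmin
  have e1 := sol_eqOn (min_le_left (N u) n) hmem
  have e2 := sol_eqOn (min_le_right (N u) n) hmem
  rw [Y, ← e1, ← e2]

lemma Y_hasDerivAt (u : ℝ) : HasDerivAt Y (v (Y u)) u := by
  set m := N u
  have hm : |u| + 1 ≤ c m := abs_add_one_le_cN u
  have hev : Y =ᶠ[𝓝 u] sol m := by
    filter_upwards [Metric.ball_mem_nhds u one_pos] with w hw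
    apply Y_eq_sol
    have : |w - u| < 1 := by rwa [Metric.mem_ball, Real.dist_eq] at hw
    have := abs_sub_abs_le_abs_sub w u
    linarith
  have hd : HasDerivAt (sol m) (v (sol m u)) u :=
    sol_hasDerivAt m (abs_lt.mp (by linarith : |u| < c m))
  have := hd.congr_of_eventuallyEq hev
  rwa [Y_eq_sol (by linarith : |u| ≤ c m)]

end SnAux

/-- Global existence and boundedness: the maximal solution of
`y'' = -2 y³`, `y(0) = 0`, `y'(0) = 1` (the Jacobi elliptic function `sn(u, i)`)
is defined on all of `ℝ` and has bounded amplitude `|y(u)| ≤ 1`. -/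
theorem sn_global_and_bounded :
    ∃ y yd : ℝ → ℝ,
      (∀ u : ℝ, HasDerivAt y (yd u) u) ∧
      (∀ u : ℝ, HasDerivAt yd (-2 * y u ^ 3) u) ∧
      y 0 = 0 ∧ yd 0 = 1 ∧ ∀ u : ℝ, |y u| ≤ 1 := by
  refine ⟨fun u => (SnAux.Y u).1, fun u => (SnAux.Y u).2, ?_, ?_, ?_, ?_, ?_⟩
  · intro u
    have := (ContinuousLinearMap.fst ℝ ℝ ℝ).hasFDerivAt.comp_hasDerivAt u (SnAux.Y_hasDerivAt u)
    simpa [SnAux.v, Function.comp_def] using this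
  · intro u
    have := (ContinuousLinearMap.snd ℝ ℝ ℝ).hasFDerivAt.comp_hasDerivAt u (SnAux.Y_hasDerivAt u)
    simpa [SnAux.v, Function.comp_def] using this
  · show (SnAux.Y 0).1 = 0
    rw [SnAux.Y_eq_sol (by simpa using le_of_lt (SnAux.c_pos 0)), SnAux.sol_zero]
  · show (SnAux.Y 0).2 = 1
    rw [SnAux.Y_eq_sol (by simpa using le_of_lt (SnAux.c_pos 0)), SnAux.sol_zero]
  · intro u
    have hm : |u| ≤ SnAux.c (SnAux.N u) := by linarith [SnAux.abs_add_one_le_cN u]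
    have hE := SnAux.sol_energy (SnAux.N u) u (abs_le.mp hm)
    rw [← SnAux.Y_eq_sol hm] at hE
    rw [abs_le]
    constructor <;> nlinarith [sq_nonneg (SnAux.Y u).2, sq_nonneg ((SnAux.Y u).1 ^ 2 - 1),
      sq_nonneg ((SnAux.Y u).1 - 1), sq_nonneg ((SnAux.Y u).1 + 1), sq_nonneg (SnAux.Y u).1]
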